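/- Let α > 0 and let X be a random variable satisfying E[|X|^{kα}] ≤ k! S² R^(k-2) / 2 for all k ≥ 2 with constants S, R > 0. Then ‖X‖_{Ψ_α} ≤ (2 max(S, R))^{1/α}. -/

import Mathlib

open MeasureTheory ProbabilityTheory

noncomputable def orliczSet {Ω : Type*} [MeasurableSpace Ω] (α : ℝ) (X : Ω → ℝ)
    (μ : Measure Ω) : Set ℝ :=
  {t : ℝ | 0 < t ∧ ∫ ω, Real.exp ((|X ω| / t) ^ α) ∂μ ≤ 2}

noncomputable def orliczNorm {Ω : Type*} [MeasurableSpace Ω] (α : ℝ) (X : Ω → ℝ)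
    (μ : Measure Ω) : ℝ :=
  sInf (orliczSet α X μ)

theorem bernstein_condition_implies_orlicz_bound
    {Ω : Type*} [MeasureSpace Ω] [IsProbabilityMeasure (ℙ : Measure Ω)]
    (α : ℝ) (hα : 0 < α) (X : Ω → ℝ) (hX : Measurable X)
    (S R : ℝ) (hS : 0 < S) (hR : 0 < R)
    (hmom : ∀ k : ℕ, 2 ≤ k →
      ∫ ω, |X ω| ^ ((k : ℝ) * α) ≤ (Nat.factorial k : ℝ) * S ^ 2 * R ^ (k - 2) / 2) :
    (orliczSet α X ℙ).Nonempty ∧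
      orliczNorm α X ℙ ≤ (2 * max S R) ^ (1 / α) := by
  set M : ℝ := max S R with hMdef
  have hM0 : 0 < M := lt_max_of_lt_left hS
  have hSM : S ≤ M := le_max_left _ _
  have hRM : R ≤ M := le_max_right _ _
  have h2M : (0:ℝ) < 2 * M := by positivity
  set t : ℝ := (2 * M) ^ (1 / α) with htdef
  have ht : 0 < t := Real.rpow_pos_of_pos h2M _
  have htα : t ^ α = 2 * M := by
    rw [htdef, ← Real.rpow_mul h2M.le, one_div, inv_mul_cancel₀ hα.ne', Real.rpow_one]
  set Y : Ω → ℝ := fun ω => |X ω| ^ α / (2 * M) with hYdef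
  have hYnn : ∀ ω, 0 ≤ Y ω := fun ω => by
    apply div_nonneg (Real.rpow_nonneg (abs_nonneg _) _) h2M.le
  have hpt : ∀ ω, (|X ω| / t) ^ α = Y ω := fun ω => by
    rw [hYdef, Real.div_rpow (abs_nonneg _) ht.le, htα]
  have habs : Measurable fun ω => |X ω| ^ α :=
    (Real.continuous_rpow_const hα.le).measurable.comp hX.abs
  have hYmeas : Measurable Y := habs.div_const _
  -- relation between Y^k and the moments
  have hYpow : ∀ (k : ℕ) (ω : Ω), Y ω ^ k = |X ω| ^ ((k : ℝ) * α) / (2 * M) ^ k := fun k ω => by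
    rw [hYdef, div_pow, ← Real.rpow_natCast (|X ω| ^ α) k, ← Real.rpow_mul (abs_nonneg _),
      mul_comm α (k : ℝ)]
  have hmain : ∫ ω, Real.exp ((|X ω| / t) ^ α) ≤ 2 := by
    by_cases hint : Integrable (fun ω => Real.exp ((|X ω| / t) ^ α)) ℙ
    swap
    · rw [integral_undef hint]; norm_num
    simp only [hpt] at hint ⊢
    -- exp (Y ω) = ∑' k, Y ω ^ k / k!
    have hexp : ∀ ω, Real.exp (Y ω) = ∑' k : ℕ, Y ω ^ k / (Nat.factorial k : ℝ) := fun ω => by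
      rw [Real.exp_eq_exp_ℝ, NormedSpace.exp_eq_tsum_div]
    have hsummand_nonneg : ∀ (k : ℕ) (ω : Ω), 0 ≤ Y ω ^ k / (Nat.factorial k : ℝ) :=
      fun k ω => div_nonneg (pow_nonneg (hYnn ω) k) (Nat.cast_nonneg _)
    have hle_exp : ∀ (k : ℕ) (ω : Ω), Y ω ^ k / (Nat.factorial k : ℝ) ≤ Real.exp (Y ω) :=
      fun k ω => by
        rw [hexp ω]
        exact Summable.le_tsum (Real.summable_pow_div_factorial (Y ω)) k
          (fun j _ => hsummand_nonneg j ω)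
    have hfmeas : ∀ k : ℕ, Measurable fun ω => Y ω ^ k / (Nat.factorial k : ℝ) := fun k =>
      (hYmeas.pow_const k).div_const _
    -- each term is integrable
    have hfint : ∀ k : ℕ, Integrable (fun ω => Y ω ^ k / (Nat.factorial k : ℝ)) ℙ := fun k => by
      refine Integrable.mono hint (hfmeas k).aestronglyMeasurable ?_
      filter_upwards with ω
      rw [Real.norm_of_nonneg (hsummand_nonneg k ω),
        Real.norm_of_nonneg (Real.exp_nonneg _)]
      exact hle_exp k ω
    -- integrability of the moments
    have hmomint : ∀ k : ℕ, Integrable (fun ω => |X ω| ^ ((k : ℝ) * α)) ℙ := fun k => by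
      have := (hfint k).const_mul ((2 * M) ^ k * (Nat.factorial k : ℝ))
      have hk1 : ((2 * M) ^ k : ℝ) ≠ 0 := (pow_pos h2M k).ne'
      have hk2 : ((Nat.factorial k : ℝ)) ≠ 0 := by
        exact_mod_cast (Nat.factorial_pos k).ne'
      refine this.congr (Filter.Eventually.of_forall fun ω => ?_)
      simp only [hYpow]
      field_simp
    -- the k = 1 moment bound via Cauchy-Schwarz
    have hmom2 : ∫ ω, |X ω| ^ ((2 : ℝ) * α) ≤ S ^ 2 := by
      have := hmom 2 le_rfl
      norm_num [Nat.factorial] at this ⊢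
      exact_mod_cast this
    have hmom1 : ∫ ω, |X ω| ^ α ≤ S := by
      have hf2 : ∫ ω, (|X ω| ^ α) ^ (2:ℝ) = ∫ ω, |X ω| ^ ((2:ℝ) * α) := by
        refine integral_congr_ae (Filter.Eventually.of_forall fun ω => ?_)
        show (|X ω| ^ α) ^ (2:ℝ) = |X ω| ^ ((2:ℝ) * α)
        rw [← Real.rpow_mul (abs_nonneg _), mul_comm]
      have hmemf : MemLp (fun ω => |X ω| ^ α) (ENNReal.ofReal 2) ℙ := by
        rw [show ENNReal.ofReal 2 = 2 by norm_num]
        rw [memLp_two_iff_integrable_sq habs.aestronglyMeasurable]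
        refine (hmomint 2).congr (Filter.Eventually.of_forall fun ω => ?_)
        show |X ω| ^ (((2:ℕ):ℝ) * α) = (|X ω| ^ α) ^ (2:ℕ)
        rw [← Real.rpow_natCast (|X ω| ^ α) 2, ← Real.rpow_mul (abs_nonneg _)]
        norm_num [mul_comm]
      have hmemg : MemLp (fun _ : Ω => (1:ℝ)) (ENNReal.ofReal 2) ℙ := memLp_const _
      have hCS := integral_mul_le_Lp_mul_Lq_of_nonneg
        Real.HolderConjugate.two_two
        (Filter.Eventually.of_forall fun ω => Real.rpow_nonneg (abs_nonneg _) _)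
        (Filter.Eventually.of_forall fun _ => zero_le_one) hmemf hmemg
      simp only [mul_one, Real.one_rpow, integral_const, measure_univ, ENNReal.toReal_one, probReal_univ,
        smul_eq_mul, one_mul] at hCS
      rw [hf2] at hCS
      calc ∫ ω, |X ω| ^ α
          ≤ (∫ ω, |X ω| ^ ((2:ℝ) * α)) ^ (1/2 : ℝ) * 1 ^ (1/2 : ℝ) := by
            rw [Real.one_rpow, mul_one]
            exact hCS
        _ ≤ (S ^ 2) ^ (1/2 : ℝ) * 1 := by
            rw [Real.one_rpow]
            gcongr
        _ = S := by
            rw [mul_one, ← Real.rpow_natCast S 2, ← Real.rpow_mul hS.le]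
            norm_num
    -- bound on each integral g k := ∫ Y^k / k!
    set g : ℕ → ℝ := fun k => ∫ ω, Y ω ^ k / (Nat.factorial k : ℝ) with hgdef
    have hg_nonneg : ∀ k, 0 ≤ g k := fun k =>
      integral_nonneg fun ω => hsummand_nonneg k ω
    have hg_eq : ∀ k : ℕ, g k = (∫ ω, |X ω| ^ ((k : ℝ) * α)) / ((2 * M) ^ k * (Nat.factorial k : ℝ)) := by
      intro k
      have hcong : (fun ω => Y ω ^ k / (Nat.factorial k : ℝ))
          = fun ω => |X ω| ^ ((k : ℝ) * α) / ((2 * M) ^ k * (Nat.factorial k : ℝ)) := by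
        funext ω
        rw [hYpow, div_div]
      simp only [hgdef, hcong]
      rw [integral_div]
    have hg_le : ∀ k : ℕ, g k ≤ (1/2 : ℝ) ^ k := by
      intro k
      match k with
      | 0 =>
        have h0 : g 0 = 1 := by simp [hgdef]
        rw [h0, pow_zero]
      | 1 =>
        rw [hg_eq 1]
        simp only [Nat.cast_one, one_mul, pow_one, Nat.factorial_one, mul_one]
        rw [div_le_iff₀ h2M]
        nlinarith [hmom1]
      | (n+2) =>
        have hfac : (0:ℝ) < ((n+2).factorial : ℝ) := by exact_mod_cast (n+2).factorial_pos
        have h2Mp : (0:ℝ) < (2*M)^(n+2) := pow_pos h2M _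
        have hbound := hmom (n+2) (by omega)
        simp only [Nat.add_sub_cancel] at hbound
        rw [hg_eq (n+2)]
        have hstep : (∫ ω, |X ω| ^ ((((n+2:ℕ)):ℝ) * α)) / ((2*M)^(n+2) * ((n+2).factorial : ℝ))
            ≤ (((n+2).factorial : ℝ) * S^2 * R^n / 2) / ((2*M)^(n+2) * ((n+2).factorial : ℝ)) := by
          gcongr
        refine hstep.trans ?_
        have heq : (((n+2).factorial : ℝ) * S^2 * R^n / 2) / ((2*M)^(n+2) * ((n+2).factorial:ℝ))
            = S^2 * R^n / (2 * (2*M)^(n+2)) := by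
          field_simp
        rw [heq]
        have hstep2 : S^2 * R^n / (2 * (2*M)^(n+2)) ≤ M^2 * M^n / (2 * (2*M)^(n+2)) := by
          gcongr
        refine hstep2.trans ?_
        have heq2 : M^2 * M^n / (2 * (2*M)^(n+2)) = (1/2:ℝ)^(n+2) / 2 := by
          rw [mul_pow]
          rw [div_pow, one_pow]
          field_simp
          ring
        rw [heq2]
        have : (0:ℝ) < (1/2:ℝ)^(n+2) := by positivity
        linarith
    -- summability
    have hgsum : Summable g :=
      Summable.of_nonneg_of_le hg_nonneg hg_le
        (summable_geometric_of_lt_one (by norm_num) (by norm_num))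
    have htsum : ∑' k, g k ≤ 2 := by
      have h2 := Summable.sum_add_tsum_nat_add 2 hgsum
      rw [← h2]
      have hsum_tail : Summable fun k => g (k + 2) := (summable_nat_add_iff 2).mpr hgsum
      have hsum_tail' : Summable fun k : ℕ => (1/2:ℝ) ^ (k + 2) :=
        (summable_nat_add_iff 2).mpr
          (summable_geometric_of_lt_one (by norm_num) (by norm_num))
      have htail : ∑' k : ℕ, g (k + 2) ≤ ∑' k : ℕ, (1/2:ℝ) ^ (k + 2) :=
        Summable.tsum_le_tsum (fun k => hg_le (k + 2)) hsum_tail hsum_tail'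
      have htail2 : ∑' k : ℕ, (1/2:ℝ) ^ (k + 2) = 1/2 := by
        have : ∀ k : ℕ, (1/2:ℝ) ^ (k+2) = (1/2:ℝ)^k * (1/4) := fun k => by ring
        simp only [this]
        rw [tsum_mul_right, tsum_geometric_of_lt_one (by norm_num) (by norm_num)]
        norm_num
      have hhead : ∑ i ∈ Finset.range 2, g i ≤ 3/2 := by
        rw [Finset.sum_range_succ, Finset.sum_range_one]
        have h0 := hg_le 0
        have h1 := hg_le 1
        norm_num at h0 h1
        linarith
      rw [htail2] at htail
      linarith
    -- swap integral and sum
    have hlint : ∀ k : ℕ, ∫⁻ ω, ‖Y ω ^ k / (Nat.factorial k : ℝ)‖ₑ ∂ℙ = ENNReal.ofReal (g k) := by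
      intro k
      simp only [hgdef]
      rw [MeasureTheory.ofReal_integral_eq_lintegral_ofReal (hfint k)
        (Filter.Eventually.of_forall (hsummand_nonneg k))]
      refine lintegral_congr fun ω => ?_
      rw [← Real.enorm_eq_ofReal (hsummand_nonneg k ω)]
    have hf' : ∑' k : ℕ, ∫⁻ ω, ‖Y ω ^ k / (Nat.factorial k : ℝ)‖ₑ ∂ℙ ≠ ⊤ := by
      simp only [hlint]
      rw [← ENNReal.ofReal_tsum_of_nonneg hg_nonneg hgsum]
      exact ENNReal.ofReal_ne_top
    have hswap := integral_tsum (fun k => (hfmeas k).aestronglyMeasurable) hf'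
    calc ∫ ω, Real.exp (Y ω)
        = ∫ ω, ∑' k : ℕ, Y ω ^ k / (Nat.factorial k : ℝ) := by
          exact integral_congr_ae (Filter.Eventually.of_forall fun ω => hexp ω)
      _ = ∑' k : ℕ, g k := hswap
      _ ≤ 2 := htsum
  refine ⟨⟨t, ht, hmain⟩, ?_⟩
  refine csInf_le ⟨0, fun s hs => hs.1.le⟩ ⟨ht, hmain⟩
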